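/- (Theorem 1) Let Φ be a finite set of subsets of E = {e_1,…,e_n}, with K nonnegative cost scenarios c_1,…,c_K ∈ ℝ^n and F(X, c_j) = Σ_{e_i ∈ X} c_{ji}. Define aggregated element costs ĉ_i = wowa_{(v,p)}(c_{1i},…,c_{Ki}) and let X̂ minimize Σ_{e_i∈X} ĉ_i over Φ. Then for every X ∈ Φ, WOWA(X̂) ≤ K·v_1·WOWA(X), where WOWA(X) = wowa_{(v,p)}(F(X,c_1),…,F(X,c_K)). -/

import Mathlib

open Finset

/-- The piecewise linear function `w*` induced by the weight vector `v`:
`w*(0)=0`, `w*(j/K) = ∑_{i≤j} v i`, linear on each `[(j-1)/K, j/K]`. -/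
noncomputable def wstar (K : ℕ) (v : Fin K → ℝ) (t : ℝ) : ℝ :=
  ∑ i : Fin K, v i * min 1 (max 0 (t * (K : ℝ) - (i.1 : ℝ)))

/-- The WOWA weight `ω_j = w*(∑_{i≤j} p_{σ(i)}) - w*(∑_{i<j} p_{σ(i)})`. -/
noncomputable def wowaWeight (K : ℕ) (v p : Fin K → ℝ) (σ : Equiv.Perm (Fin K))
    (j : Fin K) : ℝ :=
  wstar K v (∑ i ∈ Finset.Iic j, p (σ i)) - wstar K v (∑ i ∈ Finset.Iio j, p (σ i))

/-- The WOWA aggregation of `a` relative to a permutation `σ`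
(sorting `a` nonincreasingly gives the WOWA value). -/
noncomputable def wowaW (K : ℕ) (v p : Fin K → ℝ) (σ : Equiv.Perm (Fin K))
    (a : Fin K → ℝ) : ℝ :=
  ∑ j : Fin K, wowaWeight K v p σ j * a (σ j)

noncomputable def vExt (K : ℕ) (v : Fin K → ℝ) : ℕ → ℝ :=
  fun m => if h : m < K then v ⟨m, h⟩ else 0

noncomputable def dExt (K : ℕ) (v : Fin K → ℝ) : ℕ → ℝ :=
  fun m => vExt K v m - vExt K v (m + 1)

lemma sum_clamp (m : ℕ) (s : ℝ) :
    ∑ i ∈ range m, min 1 (max 0 (s - i)) = min (m : ℝ) (max 0 s) := by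
  induction m with
  | zero => simp
  | succ m ih =>
    rw [Finset.sum_range_succ, ih]
    push_cast
    rcases le_total s m with h | h
    · have h0 : (0:ℝ) ≤ m := Nat.cast_nonneg m
      rcases le_total s 0 with h2 | h2 <;>
        simp [min_def, max_def] <;> split_ifs <;> linarith
    · rcases le_total s (m+1) with h2 | h2 <;>
        simp [min_def, max_def] <;> split_ifs <;> linarith

lemma relu_inc {u u' e : ℝ} (h : u ≤ u') (he : 0 ≤ e) :
    max 0 (u + e) - max 0 u ≤ max 0 (u' + e) - max 0 u' := by
  rcases le_total u' 0 with h1 | h1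
  · have : max 0 u = 0 := max_eq_left (by linarith)
    have : max 0 u' = 0 := max_eq_left h1
    have := max_le_max (le_refl (0:ℝ)) (by linarith : u + e ≤ u' + e)
    simp_all
  · have h2 : max 0 u' = u' := max_eq_right h1
    have h3 : max 0 (u' + e) = u' + e := max_eq_right (by linarith)
    have h4 : max 0 (u + e) ≤ max 0 u + e :=
      max_le (by positivity) (by nlinarith [le_max_right (0:ℝ) u])
    linarith

lemma min_sub_relu (c x : ℝ) : min c x = x - max 0 (x - c) := by
  rcases le_total x c with h | h
  · rw [min_eq_right h, max_eq_left (by linarith)]; ring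
  · rw [min_eq_left h, max_eq_right (by linarith)]; ring

lemma minc_inc {c s s' e : ℝ} (h : s ≤ s') (he : 0 ≤ e) :
    min c (s' + e) - min c s' ≤ min c (s + e) - min c s := by
  have h1 := relu_inc (by linarith : s - c ≤ s' - c) he
  rw [min_sub_relu, min_sub_relu, min_sub_relu, min_sub_relu]
  have e1 : s' + e - c = s' - c + e := by ring
  have e2 : s + e - c = s - c + e := by ring
  rw [e1, e2]; linarith

lemma vExt_eq_sum (K : ℕ) (v : Fin K → ℝ) (i : ℕ) :
    vExt K v i = ∑ m ∈ Ico i K, dExt K v m := by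
  rcases le_or_gt K i with h | h
  · rw [Ico_eq_empty (by omega), sum_empty, vExt, dif_neg (by omega)]
  · rw [Finset.sum_Ico_eq_sum_range]
    have : ∑ m ∈ range (K - i), dExt K v (i + m)
        = ∑ m ∈ range (K - i), (vExt K v (i + m) - vExt K v (i + m + 1)) := rfl
    rw [this]
    have h2 : ∀ m ∈ range (K - i), vExt K v (i + m) - vExt K v (i + m + 1)
        = vExt K v (i + m) - vExt K v (i + (m + 1)) := by
      intro m _; ring_nf
    have h3 : i + (K - i) = K := by omega
    rw [Finset.sum_congr rfl h2, Finset.sum_range_sub' (fun m => vExt K v (i + m)), h3]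
    simp [vExt]

lemma wstar_decomp (K : ℕ) (v : Fin K → ℝ) (t : ℝ) :
    wstar K v t = ∑ m ∈ range K, dExt K v m * min ((m : ℝ) + 1) (max 0 (t * K)) := by
  have h1 : wstar K v t
      = ∑ i ∈ range K, vExt K v i * min 1 (max 0 (t * K - i)) := by
    rw [wstar, ← Fin.sum_univ_eq_sum_range (fun i => vExt K v i * min 1 (max 0 (t * K - i)))]
    apply Finset.sum_congr rfl
    intro i _
    simp [vExt, i.isLt]
  rw [h1]
  have h2 : ∀ i ∈ range K, vExt K v i * min 1 (max 0 (t * K - i))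
      = ∑ m ∈ Ico i K, dExt K v m * min 1 (max 0 (t * K - i)) := by
    intro i _
    rw [vExt_eq_sum, Finset.sum_mul]
  rw [Finset.sum_congr rfl h2]
  rw [Finset.sum_comm' (s' := fun m => range (m + 1)) (t' := range K)
    (by intro i m; simp [Nat.lt_succ_iff]; omega)]
  apply Finset.sum_congr rfl
  intro m hm
  rw [← Finset.mul_sum, sum_clamp]
  push_cast
  ring_nf

lemma dExt_nonneg (K : ℕ) (v : Fin K → ℝ) (hv0 : ∀ j, 0 ≤ v j)
    (hvmono : ∀ i j : Fin K, i ≤ j → v j ≤ v i) (m : ℕ) : 0 ≤ dExt K v m := by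
  unfold dExt vExt
  split_ifs with h1 h2
  · exact sub_nonneg.2 (hvmono ⟨m, h1⟩ ⟨m+1, h2⟩ (by simp [Fin.le_def]))
  · simpa using hv0 ⟨m, h1⟩
  · omega
  · simp

lemma sum_dExt (K : ℕ) (v : Fin K → ℝ) :
    ∑ m ∈ range K, dExt K v m = vExt K v 0 := by
  have : ∑ m ∈ range K, dExt K v m
      = ∑ m ∈ range K, (vExt K v m - vExt K v (m + 1)) := rfl
  rw [this, Finset.sum_range_sub' (fun m => vExt K v m)]
  simp [vExt]

lemma sum_dExt_weighted (K : ℕ) (v : Fin K → ℝ) :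
    ∑ m ∈ range K, dExt K v m * ((m : ℝ) + 1) = ∑ j, v j := by
  have h1 : ∀ m ∈ range K, dExt K v m * ((m : ℝ) + 1)
      = ∑ i ∈ range (m + 1), dExt K v m := by
    intro m _; rw [Finset.sum_const, card_range, nsmul_eq_mul]; push_cast; ring
  rw [Finset.sum_congr rfl h1]
  rw [← Finset.sum_comm' (s := range K) (t := fun i => Ico i K)
    (by intro i m; simp [Nat.lt_succ_iff]; omega)]
  have h2 : ∀ i ∈ range K, ∑ m ∈ Ico i K, dExt K v m = vExt K v i := by
    intro i _; rw [vExt_eq_sum]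
  rw [Finset.sum_congr rfl h2,
    ← Fin.sum_univ_eq_sum_range (fun i => vExt K v i)]
  apply Finset.sum_congr rfl
  intro i _; simp [vExt, i.isLt]

lemma wstar_zero (K : ℕ) (v : Fin K → ℝ) : wstar K v 0 = 0 := by
  unfold wstar
  apply Finset.sum_eq_zero
  intro i _
  have h1 : max 0 (0 * (K:ℝ) - i) = 0 := max_eq_left (by simp)
  rw [h1]
  simp

lemma wstar_inc (K : ℕ) (v : Fin K → ℝ) (hv0 : ∀ j, 0 ≤ v j)
    (hvmono : ∀ i j : Fin K, i ≤ j → v j ≤ v i)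
    {y x e : ℝ} (hy : 0 ≤ y) (hyx : y ≤ x) (he : 0 ≤ e) :
    wstar K v (x + e) - wstar K v x ≤ wstar K v (y + e) - wstar K v y := by
  have hx : 0 ≤ x := le_trans hy hyx
  rw [wstar_decomp K v (x + e), wstar_decomp K v x, wstar_decomp K v (y + e),
    wstar_decomp K v y]
  rw [← Finset.sum_sub_distrib, ← Finset.sum_sub_distrib]
  apply Finset.sum_le_sum
  intro m _
  have hd := dExt_nonneg K v hv0 hvmono m
  have e1 : max 0 ((x + e) * K) = x * K + e * K := by
    rw [max_eq_right (by positivity)]; ring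
  have e2 : max 0 (x * K) = x * K := max_eq_right (by positivity)
  have e3 : max 0 ((y + e) * K) = y * K + e * K := by
    rw [max_eq_right (by positivity)]; ring
  have e4 : max 0 (y * K) = y * K := max_eq_right (by positivity)
  rw [e1, e2, e3, e4]
  have h1 := minc_inc (c := (m : ℝ) + 1)
    (by nlinarith [(Nat.cast_nonneg K : (0:ℝ) ≤ K)] : y * K ≤ x * K)
    (by positivity : (0:ℝ) ≤ e * K)
  nlinarith [mul_le_mul_of_nonneg_left h1 hd]

lemma wstar_lip (K : ℕ) (v : Fin K → ℝ) (hK : 0 < K) (hv0 : ∀ j, 0 ≤ v j)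
    (hvmono : ∀ i j : Fin K, i ≤ j → v j ≤ v i)
    {x e : ℝ} (hx : 0 ≤ x) (he : 0 ≤ e) :
    wstar K v (x + e) - wstar K v x ≤ (K : ℝ) * v ⟨0, hK⟩ * e := by
  have h1 := wstar_inc K v hv0 hvmono (le_refl 0) hx he
  rw [zero_add, wstar_zero, sub_zero] at h1
  have h2 : wstar K v e ≤ (K : ℝ) * v ⟨0, hK⟩ * e := by
    rw [wstar_decomp]
    have h3 : ∀ m ∈ range K, dExt K v m * min ((m : ℝ) + 1) (max 0 (e * K))
        ≤ dExt K v m * (e * K) := by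
      intro m _
      apply mul_le_mul_of_nonneg_left _ (dExt_nonneg K v hv0 hvmono m)
      calc min ((m : ℝ) + 1) (max 0 (e * K)) ≤ max 0 (e * K) := min_le_right _ _
        _ = e * K := max_eq_right (by positivity)
    calc ∑ m ∈ range K, dExt K v m * min ((m : ℝ) + 1) (max 0 (e * K))
        ≤ ∑ m ∈ range K, dExt K v m * (e * K) := Finset.sum_le_sum h3
      _ = (∑ m ∈ range K, dExt K v m) * (e * K) := by rw [Finset.sum_mul]
      _ = vExt K v 0 * (e * K) := by rw [sum_dExt]
      _ = (K : ℝ) * v ⟨0, hK⟩ * e := by simp [vExt, hK]; ring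
  linarith

lemma wstar_ge (K : ℕ) (v : Fin K → ℝ) (hv0 : ∀ j, 0 ≤ v j)
    (hvmono : ∀ i j : Fin K, i ≤ j → v j ≤ v i) (hvs : ∑ j, v j = 1)
    {t : ℝ} (h0 : 0 ≤ t) (h1 : t ≤ 1) : t ≤ wstar K v t := by
  rw [wstar_decomp]
  have h2 : ∀ m ∈ range K, dExt K v m * (((m : ℝ) + 1) * t)
      ≤ dExt K v m * min ((m : ℝ) + 1) (max 0 (t * K)) := by
    intro m hm
    apply mul_le_mul_of_nonneg_left _ (dExt_nonneg K v hv0 hvmono m)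
    apply le_min
    · nlinarith [(Nat.cast_nonneg m : (0:ℝ) ≤ m)]
    · rw [max_eq_right (by positivity)]
      have : (m : ℝ) + 1 ≤ K := by
        have h4 := mem_range.1 hm
        exact_mod_cast Nat.succ_le_of_lt h4
      nlinarith
  calc t = (∑ m ∈ range K, dExt K v m * ((m : ℝ) + 1)) * t := by
        rw [sum_dExt_weighted, hvs, one_mul]
    _ = ∑ m ∈ range K, dExt K v m * (((m : ℝ) + 1) * t) := by
        rw [Finset.sum_mul]; apply Finset.sum_congr rfl; intro m _; ring
    _ ≤ _ := Finset.sum_le_sum h2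


noncomputable def Qp (K : ℕ) (q : Fin K → ℝ) (n : ℕ) : ℝ :=
  ∑ k ∈ univ.filter (fun k : Fin K => k.1 < n), q k

lemma filt_succ {K n : ℕ} (h : n < K) :
    univ.filter (fun k : Fin K => k.1 < n + 1)
      = insert ⟨n, h⟩ (univ.filter (fun k : Fin K => k.1 < n)) := by
  ext k
  simp [Fin.ext_iff]
  omega

lemma filt_ge {K n : ℕ} (h : K ≤ n) :
    univ.filter (fun k : Fin K => k.1 < n) = univ := by
  apply filter_true_of_mem
  intro k _
  exact lt_of_lt_of_le k.isLt h

lemma not_mem_filt {K n : ℕ} (h : n < K) :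
    (⟨n, h⟩ : Fin K) ∉ univ.filter (fun k : Fin K => k.1 < n) := by
  simp

lemma Qp_zero {K : ℕ} (q : Fin K → ℝ) : Qp K q 0 = 0 := by
  unfold Qp
  rw [filter_false_of_mem (by intro k _; omega)]
  simp

lemma Qp_succ {K n : ℕ} (q : Fin K → ℝ) (h : n < K) :
    Qp K q (n + 1) = q ⟨n, h⟩ + Qp K q n := by
  unfold Qp
  rw [filt_succ h, sum_insert (not_mem_filt h)]

lemma Qp_succ' {K n : ℕ} (q : Fin K → ℝ) (h : K ≤ n) :
    Qp K q (n + 1) = Qp K q n := by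
  unfold Qp
  rw [filt_ge h, filt_ge (le_trans h (Nat.le_succ n))]

lemma Qp_nonneg {K : ℕ} (q : Fin K → ℝ) (hq : ∀ k, 0 ≤ q k) (n : ℕ) :
    0 ≤ Qp K q n :=
  Finset.sum_nonneg (fun k _ => hq k)

lemma Qp_le_total {K : ℕ} (q : Fin K → ℝ) (hq : ∀ k, 0 ≤ q k) (n : ℕ) :
    Qp K q n ≤ ∑ k, q k :=
  Finset.sum_le_sum_of_subset_of_nonneg (subset_univ _) (fun k _ _ => hq k)

/-- telescoping sum of weights over an initial segment -/
lemma tele {K : ℕ} (v q : Fin K → ℝ) (n : ℕ) :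
    ∑ k ∈ univ.filter (fun k : Fin K => k.1 < n),
      (wstar K v (Qp K q (k.1 + 1)) - wstar K v (Qp K q k.1))
      = wstar K v (Qp K q n) - wstar K v 0 := by
  induction n with
  | zero =>
    rw [Qp_zero, filter_false_of_mem (by intro k _; omega)]
    simp
  | succ n ih =>
    rcases lt_or_ge n K with h | h
    · rw [filt_succ h, sum_insert (not_mem_filt h), ih]
      ring
    · rw [Qp_succ' q h]
      rw [show univ.filter (fun k : Fin K => k.1 < n + 1)
          = univ.filter (fun k : Fin K => k.1 < n) from by
        rw [filt_ge h, filt_ge (le_trans h (Nat.le_succ n))]]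
      exact ih

/-- chain bound: sum of weight increments over any subset is at most
`wstar` of the subset's mass. -/
lemma chain {K : ℕ} (v q : Fin K → ℝ) (hv0 : ∀ j, 0 ≤ v j)
    (hvmono : ∀ i j : Fin K, i ≤ j → v j ≤ v i) (hq : ∀ k, 0 ≤ q k)
    (S : Finset (Fin K)) :
    ∑ k ∈ S, (wstar K v (Qp K q (k.1 + 1)) - wstar K v (Qp K q k.1))
      ≤ wstar K v (∑ k ∈ S, q k) := by
  have main : ∀ n : ℕ,
      ∑ k ∈ S.filter (fun k : Fin K => k.1 < n),
        (wstar K v (Qp K q (k.1 + 1)) - wstar K v (Qp K q k.1))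
      ≤ wstar K v (∑ k ∈ S.filter (fun k : Fin K => k.1 < n), q k) := by
    intro n
    induction n with
    | zero =>
      rw [filter_false_of_mem (by intro k _; omega)]
      simp [wstar_zero]
    | succ n ih =>
      rcases lt_or_ge n K with h | h
      · by_cases hm : (⟨n, h⟩ : Fin K) ∈ S
        · have hfe : S.filter (fun k : Fin K => k.1 < n + 1)
              = insert ⟨n, h⟩ (S.filter (fun k : Fin K => k.1 < n)) := by
            ext k
            simp [Fin.ext_iff]
            constructor
            · rintro ⟨hk, hk2⟩
              rcases Nat.lt_or_eq_of_le hk2 with h3 | h3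
              · exact Or.inr ⟨hk, h3⟩
              · exact Or.inl h3
            · rintro (h3 | ⟨hk, hk2⟩)
              · have : k = ⟨n, h⟩ := Fin.ext h3
                subst this; exact ⟨hm, Nat.le_refl n⟩
              · exact ⟨hk, Nat.le_of_lt hk2⟩
          have hnm : (⟨n, h⟩ : Fin K) ∉ S.filter (fun k : Fin K => k.1 < n) := by
            simp
          rw [hfe, sum_insert hnm, sum_insert hnm]
          have hsub : Qp K q (n + 1) = Qp K q n + q ⟨n, h⟩ := by
            rw [Qp_succ q h]; ring
          have hBle : ∑ k ∈ S.filter (fun k : Fin K => k.1 < n), q k ≤ Qp K q n := by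
            apply Finset.sum_le_sum_of_subset_of_nonneg _ (fun k _ _ => hq k)
            intro k hk
            simp at hk ⊢
            exact hk.2
          have hB0 : 0 ≤ ∑ k ∈ S.filter (fun k : Fin K => k.1 < n), q k :=
            Finset.sum_nonneg (fun k _ => hq k)
          have hinc := wstar_inc K v hv0 hvmono hB0 hBle (hq ⟨n, h⟩)
          rw [← hsub] at hinc
          calc (wstar K v (Qp K q (n + 1)) - wstar K v (Qp K q n))
                + ∑ k ∈ S.filter (fun k : Fin K => k.1 < n),
                  (wstar K v (Qp K q (k.1 + 1)) - wstar K v (Qp K q k.1))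
              ≤ (wstar K v ((∑ k ∈ S.filter (fun k : Fin K => k.1 < n), q k) + q ⟨n, h⟩)
                  - wstar K v (∑ k ∈ S.filter (fun k : Fin K => k.1 < n), q k))
                + wstar K v (∑ k ∈ S.filter (fun k : Fin K => k.1 < n), q k) := by
                linarith
            _ = wstar K v (q ⟨n, h⟩ + ∑ k ∈ S.filter (fun k : Fin K => k.1 < n), q k) := by
                ring_nf
          -- goal should now match
        · have hfe : S.filter (fun k : Fin K => k.1 < n + 1)
              = S.filter (fun k : Fin K => k.1 < n) := by
            ext k
            simp
            intro hk
            constructor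
            · intro hk2
              rcases Nat.lt_or_eq_of_le hk2 with h3 | h3
              · exact h3
              · have hke : k = ⟨n, h⟩ := Fin.ext h3
                exact absurd (hke ▸ hk) hm
            · exact Nat.le_of_lt
          rw [hfe]; exact ih
      · have hfe : S.filter (fun k : Fin K => k.1 < n + 1)
            = S.filter (fun k : Fin K => k.1 < n) := by
          ext k
          simp
          intro _
          have := k.isLt
          omega
        rw [hfe]; exact ih
  have hfin : S.filter (fun k : Fin K => k.1 < K) = S :=
    filter_true_of_mem (fun k _ => k.isLt)
  have := main K
  rwa [hfin] at this

lemma wowaWeight_eq {K : ℕ} (v p : Fin K → ℝ) (π : Equiv.Perm (Fin K)) (j : Fin K) :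
    wowaWeight K v p π j
      = wstar K v (Qp K (fun k => p (π k)) (j.1 + 1))
        - wstar K v (Qp K (fun k => p (π k)) j.1) := by
  unfold wowaWeight Qp
  congr 2
  · apply Finset.sum_congr _ (fun _ _ => rfl)
    ext k
    simp only [Finset.mem_Iic, Finset.mem_filter, Finset.mem_univ, true_and, Fin.le_def]
    omega
  · apply Finset.sum_congr _ (fun _ _ => rfl)
    ext k
    simp only [Finset.mem_Iio, Finset.mem_filter, Finset.mem_univ, true_and, Fin.lt_def]

lemma abel_nonneg (G β : ℕ → ℝ) (K : ℕ) (hG0 : G 0 = 0) (hG : ∀ n, 0 ≤ G n)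
    (hβmono : ∀ n, β (n + 1) ≤ β n) (hβ0 : ∀ n, 0 ≤ β n) :
    0 ≤ ∑ n ∈ range K, (G (n + 1) - G n) * β n := by
  have claim : ∀ N, G N * β N ≤ ∑ n ∈ range N, (G (n + 1) - G n) * β n := by
    intro N
    induction N with
    | zero => simp [hG0]
    | succ N ih =>
      rw [Finset.sum_range_succ]
      have h1 : G (N + 1) * β (N + 1) ≤ G (N + 1) * β N :=
        mul_le_mul_of_nonneg_left (hβmono N) (hG (N + 1))
      nlinarith
  calc (0:ℝ) ≤ G K * β K := mul_nonneg (hG K) (hβ0 K)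
    _ ≤ _ := claim K

lemma wowa_upper {K : ℕ} (hK : 0 < K) (v p : Fin K → ℝ) (hv0 : ∀ j, 0 ≤ v j)
    (hvmono : ∀ i j : Fin K, i ≤ j → v j ≤ v i) (hp0 : ∀ j, 0 ≤ p j)
    (a : Fin K → ℝ) (ha : ∀ k, 0 ≤ a k) (σ : Equiv.Perm (Fin K)) :
    wowaW K v p σ a ≤ (K : ℝ) * v ⟨0, hK⟩ * ∑ j, p j * a j := by
  set q : Fin K → ℝ := fun k => p (σ k) with hq
  have hω : ∀ j : Fin K, wowaWeight K v p σ j ≤ (K : ℝ) * v ⟨0, hK⟩ * q j := by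
    intro j
    rw [wowaWeight_eq]
    have h1 : Qp K q (j.1 + 1) = Qp K q j.1 + q j := by
      rw [Qp_succ q j.isLt]
      simp [Fin.eta]
      ring
    rw [h1]
    exact wstar_lip K v hK hv0 hvmono (Qp_nonneg q (fun k => hp0 (σ k)) j.1) (hp0 (σ j))
  calc wowaW K v p σ a
      ≤ ∑ j : Fin K, ((K : ℝ) * v ⟨0, hK⟩ * q j) * a (σ j) := by
        apply Finset.sum_le_sum
        intro j _
        exact mul_le_mul_of_nonneg_right (hω j) (ha (σ j))
    _ = (K : ℝ) * v ⟨0, hK⟩ * ∑ j : Fin K, p (σ j) * a (σ j) := by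
        rw [Finset.mul_sum]
        apply Finset.sum_congr rfl
        intro j _; ring
    _ = (K : ℝ) * v ⟨0, hK⟩ * ∑ j, p j * a j := by
        rw [Equiv.sum_comp σ (fun j => p j * a j)]

lemma wowa_lower {K : ℕ} (v p : Fin K → ℝ) (hv0 : ∀ j, 0 ≤ v j)
    (hvmono : ∀ i j : Fin K, i ≤ j → v j ≤ v i) (hvs : ∑ j, v j = 1)
    (hp0 : ∀ j, 0 ≤ p j) (hps : ∑ j, p j = 1)
    (a : Fin K → ℝ) (ha : ∀ k, 0 ≤ a k) (σ : Equiv.Perm (Fin K))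
    (hsort : ∀ j j' : Fin K, j ≤ j' → a (σ j') ≤ a (σ j)) :
    ∑ j, p j * a j ≤ wowaW K v p σ a := by
  set q : Fin K → ℝ := fun k => p (σ k) with hq
  have hq0 : ∀ k, 0 ≤ q k := fun k => hp0 (σ k)
  set G : ℕ → ℝ := fun m => wstar K v (Qp K q m) - Qp K q m with hGdef
  set β : ℕ → ℝ := fun m => if h : m < K then a (σ ⟨m, h⟩) else 0 with hβdef
  have hdiff : ∀ j : Fin K,
      (wowaWeight K v p σ j - q j) * a (σ j) = (G (j.1 + 1) - G j.1) * β j.1 := by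
    intro j
    have h1 : Qp K q (j.1 + 1) = q j + Qp K q j.1 := by
      rw [Qp_succ q j.isLt]
    have h2 : β j.1 = a (σ j) := by
      rw [hβdef]; simp [j.isLt]
    rw [wowaWeight_eq, h2, hGdef]
    simp only
    rw [h1]
    ring
  have hsum : wowaW K v p σ a - ∑ j, p j * a j
      = ∑ m ∈ range K, (G (m + 1) - G m) * β m := by
    have e1 : ∑ j, p j * a j = ∑ j : Fin K, q j * a (σ j) :=
      (Equiv.sum_comp σ (fun j => p j * a j)).symm
    rw [e1, wowaW, ← Finset.sum_sub_distrib]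
    rw [← Fin.sum_univ_eq_sum_range (fun m => (G (m + 1) - G m) * β m) K]
    apply Finset.sum_congr rfl
    intro j _
    rw [← hdiff j]
    ring
  have habel : 0 ≤ ∑ m ∈ range K, (G (m + 1) - G m) * β m := by
    apply abel_nonneg
    · rw [hGdef]; simp [Qp_zero, wstar_zero]
    · intro m
      rw [hGdef]
      simp only [sub_nonneg]
      apply wstar_ge K v hv0 hvmono hvs (Qp_nonneg q hq0 m)
      calc Qp K q m ≤ ∑ k, q k := Qp_le_total q hq0 m
        _ = ∑ k, p k := Equiv.sum_comp σ p
        _ = 1 := hps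
    · intro m
      rw [hβdef]
      simp only
      split_ifs with h1 h2 h3
      · exact hsort ⟨m, h2⟩ ⟨m + 1, h1⟩ (by simp [Fin.le_def])
      · omega
      · exact ha _
      · exact le_refl 0
    · intro m
      rw [hβdef]
      simp only
      split_ifs with h1
      · exact ha _
      · exact le_refl 0
  linarith

lemma wowa_key {K : ℕ} (v p : Fin K → ℝ) (hv0 : ∀ j, 0 ≤ v j)
    (hvmono : ∀ i j : Fin K, i ≤ j → v j ≤ v i) (hp0 : ∀ j, 0 ≤ p j)
    (a : Fin K → ℝ) (ha : ∀ k, 0 ≤ a k) (σ τ : Equiv.Perm (Fin K))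
    (hsort : ∀ j j' : Fin K, j ≤ j' → a (σ j') ≤ a (σ j)) :
    wowaW K v p τ a ≤ wowaW K v p σ a := by
  set b : ℕ → ℝ := fun m => if h : m < K then a (σ ⟨m, h⟩) else 0 with hbdef
  set δ : ℕ → ℝ := fun m => b m - b (m + 1) with hδdef
  have hδ0 : ∀ m, 0 ≤ δ m := by
    intro m
    rw [hδdef, hbdef]
    simp only [sub_nonneg]
    split_ifs with h1 h2 h3
    · exact hsort ⟨m, h2⟩ ⟨m + 1, h1⟩ (by simp [Fin.le_def])
    · omega
    · exact ha _
    · exact le_refl 0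
  have layer : ∀ k : Fin K,
      a k = ∑ j ∈ range K, (if (σ.symm k).1 ≤ j then δ j else 0) := by
    intro k
    have hr : (σ.symm k).1 < K := (σ.symm k).isLt
    set r := (σ.symm k).1 with hrdef
    have h1 : ∑ j ∈ range K, (if r ≤ j then δ j else 0) = ∑ j ∈ Ico r K, δ j := by
      rw [← Finset.sum_filter]
      apply Finset.sum_congr _ (fun _ _ => rfl)
      ext j
      simp
      omega
    rw [h1, Finset.sum_Ico_eq_sum_range]
    have h2 : ∀ m ∈ range (K - r), δ (r + m) = b (r + m) - b (r + (m + 1)) := by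
      intro m _
      rw [hδdef]
      simp only
      ring_nf
    rw [Finset.sum_congr rfl h2, Finset.sum_range_sub' (fun m => b (r + m))]
    have h3 : r + (K - r) = K := by omega
    rw [h3, add_zero, hbdef]
    simp only [hr, dif_pos, lt_irrefl, dif_neg, not_false_iff, sub_zero]
    exact (congrArg a (Equiv.apply_symm_apply σ k)).symm
  have swap : ∀ π : Equiv.Perm (Fin K),
      wowaW K v p π a = ∑ j ∈ range K, δ j *
        (∑ k ∈ univ.filter (fun k : Fin K => (σ.symm (π k)).1 ≤ j),
          wowaWeight K v p π k) := by
    intro π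
    rw [wowaW]
    have h1 : ∀ k : Fin K, wowaWeight K v p π k * a (π k)
        = ∑ j ∈ range K,
            (if (σ.symm (π k)).1 ≤ j then wowaWeight K v p π k * δ j else 0) := by
      intro k
      rw [layer (π k), Finset.mul_sum]
      apply Finset.sum_congr rfl
      intro j _
      rw [mul_ite, mul_zero]
    rw [Finset.sum_congr rfl (fun k _ => h1 k), Finset.sum_comm]
    apply Finset.sum_congr rfl
    intro j _
    rw [← Finset.sum_filter, Finset.mul_sum]
    apply Finset.sum_congr rfl
    intro k _
    ring
  have hσval : ∀ j : ℕ,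
      (∑ k ∈ univ.filter (fun k : Fin K => (σ.symm (σ k)).1 ≤ j),
        wowaWeight K v p σ k)
      = wstar K v (Qp K (fun k => p (σ k)) (j + 1)) := by
    intro j
    have hfe : univ.filter (fun k : Fin K => (σ.symm (σ k)).1 ≤ j)
        = univ.filter (fun k : Fin K => k.1 < j + 1) := by
      ext k
      simp [Nat.lt_succ_iff]
    rw [hfe, Finset.sum_congr rfl (fun k _ => wowaWeight_eq v p σ k),
      tele v (fun k => p (σ k)) (j + 1), wstar_zero, sub_zero]
  have hτval : ∀ j : ℕ,
      (∑ k ∈ univ.filter (fun k : Fin K => (σ.symm (τ k)).1 ≤ j),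
        wowaWeight K v p τ k)
      ≤ wstar K v (Qp K (fun k => p (σ k)) (j + 1)) := by
    intro j
    have mass : ∑ k ∈ univ.filter (fun k : Fin K => (σ.symm (τ k)).1 ≤ j), p (τ k)
        = Qp K (fun k => p (σ k)) (j + 1) := by
      have e1 : ∑ k ∈ univ.filter (fun k : Fin K => (σ.symm (τ k)).1 ≤ j), p (τ k)
          = ∑ k ∈ univ.filter (fun k : Fin K => (σ.symm k).1 ≤ j), p k :=
        Finset.sum_equiv τ (by intro i; simp) (by intro i _; rfl)
      have e2 : Qp K (fun k => p (σ k)) (j + 1)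
          = ∑ k ∈ univ.filter (fun k : Fin K => (σ.symm k).1 ≤ j), p k := by
        unfold Qp
        refine Finset.sum_equiv σ ?_ (by intro i _; rfl)
        intro i
        simp [Nat.lt_succ_iff]
      rw [e1, e2]
    calc (∑ k ∈ univ.filter (fun k : Fin K => (σ.symm (τ k)).1 ≤ j),
          wowaWeight K v p τ k)
        = ∑ k ∈ univ.filter (fun k : Fin K => (σ.symm (τ k)).1 ≤ j),
            (wstar K v (Qp K (fun k => p (τ k)) (k.1 + 1))
              - wstar K v (Qp K (fun k => p (τ k)) k.1)) :=
          Finset.sum_congr rfl (fun k _ => wowaWeight_eq v p τ k)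
      _ ≤ wstar K v (∑ k ∈ univ.filter (fun k : Fin K => (σ.symm (τ k)).1 ≤ j),
            p (τ k)) :=
          chain v (fun k => p (τ k)) hv0 hvmono (fun k => hp0 (τ k)) _
      _ = wstar K v (Qp K (fun k => p (σ k)) (j + 1)) := by rw [mass]
  rw [swap τ, swap σ]
  apply Finset.sum_le_sum
  intro j _
  rw [hσval j]
  exact mul_le_mul_of_nonneg_left (hτval j) (hδ0 j)

/-- Theorem 1: if X̂ minimizes the aggregated costs ĉ, then
WOWA(X̂) ≤ K·v₁·WOWA(X) for every feasible X. -/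
theorem wowa_approx (K n : ℕ) (hK : 0 < K) (v p : Fin K → ℝ)
    (hv0 : ∀ j, 0 ≤ v j) (hvs : ∑ j, v j = 1)
    (hvmono : ∀ i j : Fin K, i ≤ j → v j ≤ v i)
    (hp0 : ∀ j, 0 < p j) (hps : ∑ j, p j = 1)
    (c : Fin K → Fin n → ℝ) (hc : ∀ j i, 0 ≤ c j i)
    (Φ : Finset (Finset (Fin n)))
    -- sorting permutations for the cost vector of each element
    (σc : Fin n → Equiv.Perm (Fin K))
    (hσc : ∀ i, ∀ j j' : Fin K, j ≤ j' → c (σc i j') i ≤ c (σc i j) i)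
    -- sorting permutations for the cost vector of each solution
    (σS : Finset (Fin n) → Equiv.Perm (Fin K))
    (hσS : ∀ X : Finset (Fin n), ∀ j j' : Fin K, j ≤ j' →
      (∑ i ∈ X, c (σS X j') i) ≤ ∑ i ∈ X, c (σS X j) i)
    (Xhat : Finset (Fin n)) (hXhatΦ : Xhat ∈ Φ)
    (hXhat : ∀ X ∈ Φ, (∑ i ∈ Xhat, wowaW K v p (σc i) (fun j => c j i)) ≤
      ∑ i ∈ X, wowaW K v p (σc i) (fun j => c j i)) :
    ∀ X ∈ Φ,
      wowaW K v p (σS Xhat) (fun j => ∑ i ∈ Xhat, c j i) ≤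
        (K : ℝ) * v ⟨0, hK⟩ * wowaW K v p (σS X) (fun j => ∑ i ∈ X, c j i) := by
  intro X hX
  have hp0' : ∀ j, 0 ≤ p j := fun j => (hp0 j).le
  have hKv0 : (0:ℝ) ≤ (K : ℝ) * v ⟨0, hK⟩ :=
    mul_nonneg (Nat.cast_nonneg K) (hv0 _)
  have step1 : wowaW K v p (σS Xhat) (fun j => ∑ i ∈ Xhat, c j i)
      = ∑ i ∈ Xhat, wowaW K v p (σS Xhat) (fun j => c j i) := by
    unfold wowaW
    calc ∑ j : Fin K, wowaWeight K v p (σS Xhat) j * ∑ i ∈ Xhat, c (σS Xhat j) i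
        = ∑ j : Fin K, ∑ i ∈ Xhat,
            wowaWeight K v p (σS Xhat) j * c (σS Xhat j) i := by
          apply Finset.sum_congr rfl
          intro j _
          rw [Finset.mul_sum]
      _ = ∑ i ∈ Xhat, ∑ j : Fin K,
            wowaWeight K v p (σS Xhat) j * c (σS Xhat j) i := Finset.sum_comm
  have step2 : ∑ i ∈ Xhat, wowaW K v p (σS Xhat) (fun j => c j i)
      ≤ ∑ i ∈ Xhat, wowaW K v p (σc i) (fun j => c j i) := by
    apply Finset.sum_le_sum
    intro i _
    exact wowa_key v p hv0 hvmono hp0' (fun j => c j i) (fun j => hc j i)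
      (σc i) (σS Xhat) (hσc i)
  have step3 := hXhat X hX
  have step4 : ∑ i ∈ X, wowaW K v p (σc i) (fun j => c j i)
      ≤ (K : ℝ) * v ⟨0, hK⟩ * ∑ j, p j * (∑ i ∈ X, c j i) := by
    calc ∑ i ∈ X, wowaW K v p (σc i) (fun j => c j i)
        ≤ ∑ i ∈ X, (K : ℝ) * v ⟨0, hK⟩ * ∑ j, p j * c j i := by
          apply Finset.sum_le_sum
          intro i _
          exact wowa_upper hK v p hv0 hvmono hp0' (fun j => c j i)
            (fun j => hc j i) (σc i)
      _ = (K : ℝ) * v ⟨0, hK⟩ * ∑ i ∈ X, ∑ j, p j * c j i := by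
          rw [Finset.mul_sum]
      _ = (K : ℝ) * v ⟨0, hK⟩ * ∑ j, p j * (∑ i ∈ X, c j i) := by
          rw [Finset.sum_comm]
          congr 1
          apply Finset.sum_congr rfl
          intro j _
          rw [Finset.mul_sum]
  have step5 : ∑ j, p j * (∑ i ∈ X, c j i)
      ≤ wowaW K v p (σS X) (fun j => ∑ i ∈ X, c j i) :=
    wowa_lower v p hv0 hvmono hvs hp0' hps (fun j => ∑ i ∈ X, c j i)
      (fun j => Finset.sum_nonneg (fun i _ => hc j i)) (σS X) (hσS X)
  have step5' := mul_le_mul_of_nonneg_left step5 hKv0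
  linarith
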